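/- Let A be a positive integer not divisible by 4 and suppose A² + 4 = q^k for an odd prime q and integer k ≥ 2. Then A = 2 or A = 11. -/

import Mathlib

attribute [local instance] EuclideanDomain.gcdMonoid
open Finset

namespace Stmt7

abbrev ZI := GaussianInt

lemma odd_sq_sub_one (a : ℤ) (ha : Odd a) : (8:ℤ) ∣ a^2 - 1 := by
  obtain ⟨c, rfl⟩ := ha
  obtain ⟨t, ht⟩ := Int.even_mul_succ_self c
  exact ⟨t, by linear_combination 4*ht⟩

lemma odd_pow_two_pow (a : ℤ) (ha : Odd a) : ∀ (t u : ℕ), (2^(t+3):ℤ) ∣ a^(2^(t+1)*u) - 1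
  | 0, u => by
      have h8 : (8:ℤ) ∣ a^2 - 1 := odd_sq_sub_one a ha
      have h2 : a^(2^1*u) - 1 = (a^2)^u - 1^u := by
        rw [pow_mul]; norm_num
      rw [h2]
      exact dvd_trans (by norm_num at h8 ⊢; exact h8) (sub_dvd_pow_sub_pow (a^2) 1 u)
  | (t+1), u => by
      have ih := odd_pow_two_pow a ha t u
      have hodd : Odd (a^(2^(t+1)*u)) := ha.pow
      obtain ⟨c, hc⟩ := hodd
      have hx : a^(2^(t+2)*u) - 1 = (a^(2^(t+1)*u) - 1) * (a^(2^(t+1)*u) + 1) := by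
        rw [show 2^(t+2)*u = (2^(t+1)*u)*2 by ring, pow_mul]; ring
      rw [hx]
      have h2 : (2:ℤ) ∣ a^(2^(t+1)*u) + 1 := ⟨c+1, by omega⟩
      calc (2^(t+4):ℤ) = 2^(t+3) * 2 := by ring
      _ ∣ (a^(2^(t+1)*u) - 1) * (a^(2^(t+1)*u) + 1) := mul_dvd_mul ih h2

lemma odd_pow_mod (a : ℤ) (ha : Odd a) (r m : ℕ) (hr : 1 ≤ r) (hm : 2^r ∣ m) :
    (2^(r+2):ℤ) ∣ a^m - 1 := by
  obtain ⟨u, rfl⟩ := hm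
  have h := odd_pow_two_pow a ha (r-1) u
  have h1 : r - 1 + 1 = r := by omega
  have h2 : r - 1 + 3 = r + 2 := by omega
  rwa [h1, h2] at h

lemma odd_pow_even (a : ℤ) (ha : Odd a) (m : ℕ) (hm : 2 ∣ m) : (8:ℤ) ∣ a^m - 1 := by
  have := odd_pow_mod a ha 1 m (le_refl 1) (by simpa using hm)
  norm_num at this ⊢; exact this

def ii : ZI := ⟨0,1⟩

lemma ii_sq : ii^2 = -1 := by
  ext <;> simp [ii, pow_two, Zsqrtd.re_mul, Zsqrtd.im_mul]

lemma ii_pow_four : ii^4 = 1 := by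
  rw [show (4:ℕ) = 2*2 from rfl, pow_mul, ii_sq]; ring

lemma ii_pow_mod (j : ℕ) : ii^j = ii^(j % 4) := by
  conv_lhs => rw [← Nat.div_add_mod j 4]
  rw [pow_add, pow_mul, ii_pow_four, one_pow, one_mul]

def g (j : ℕ) : ℤ := (ii^j).im

lemma g_eq (j : ℕ) : g j = if j % 4 = 1 then 1 else if j % 4 = 3 then -1 else 0 := by
  unfold g
  rw [ii_pow_mod]
  have h : j % 4 < 4 := Nat.mod_lt _ (by norm_num)
  interval_cases h' : j % 4 <;>
    simp [ii, pow_succ, Zsqrtd.re_mul, Zsqrtd.im_mul]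

def imhom : ZI →+ ℤ where
  toFun z := z.im
  map_zero' := rfl
  map_add' _ _ := rfl

lemma mk_eq (a b : ℤ) : (⟨a,b⟩ : ZI) = (a:ZI) + (b:ZI)*ii := by
  ext <;> simp [ii, Zsqrtd.re_mul, Zsqrtd.im_mul]

lemma intCast_mul_im (r : ℤ) (z : ZI) : ((r:ZI)*z).im = r * z.im := by
  simp [Zsqrtd.im_mul]

lemma im_pow_eq_sum (a b : ℤ) (n : ℕ) :
    ((⟨a,b⟩:ZI)^n).im
      = ∑ k ∈ range (n+1), a^k * b^(n-k) * (Nat.choose n k : ℤ) * g (n-k) := by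
  rw [mk_eq, add_pow]
  have : ((∑ k ∈ range (n+1), (a:ZI)^k * ((b:ZI)*ii)^(n-k) * (Nat.choose n k : ZI))).im
      = imhom (∑ k ∈ range (n+1), (a:ZI)^k * ((b:ZI)*ii)^(n-k) * (Nat.choose n k : ZI)) := rfl
  rw [this, map_sum]
  apply Finset.sum_congr rfl
  intro k _
  have h1 : (a:ZI)^k * ((b:ZI)*ii)^(n-k) * (Nat.choose n k : ZI)
      = ((a^k * b^(n-k) * (Nat.choose n k : ℤ) : ℤ) : ZI) * ii^(n-k) := by
    push_cast
    ring
  show ((a:ZI)^k * ((b:ZI)*ii)^(n-k) * (Nat.choose n k : ZI)).im = _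
  rw [h1, intCast_mul_im]
  unfold g
  ring



lemma choose_identity (p j : ℕ) (hj : 2 ≤ j) (hp : 2 ≤ p) :
    Nat.choose p j * j * (j-1) = p * ((p-1) * Nat.choose (p-2) (j-2)) := by
  have h1 := Nat.add_one_mul_choose_eq (p-1) (j-1)
  have h2 := Nat.add_one_mul_choose_eq (p-2) (j-2)
  have e1 : p-1+1 = p := by omega
  have e2 : j-1+1 = j := by omega
  have e3 : p-2+1 = p-1 := by omega
  have e4 : j-2+1 = j-1 := by omega
  rw [e1, e2] at h1
  rw [e3, e4] at h2
  calc Nat.choose p j * j * (j-1) = p * Nat.choose (p-1) (j-1) * (j-1) := by rw [h1]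
  _ = p * ((p-1) * Nat.choose (p-2) (j-2)) := by rw [mul_assoc, ← h2]

lemma term_div (p j r : ℕ) (hj3 : 3 ≤ j) (hjodd : Odd j) (hjp : j ≤ p)
    (hd : 2^r ∣ p - 1) : (2^(r+2)) ∣ 2^j * (Nat.choose p j) := by
  have hp2 : 2 ≤ p := by omega
  have hdd : 2^r ∣ Nat.choose p j * j * (j-1) := by
    rw [choose_identity p j (by omega) hp2]
    exact Dvd.dvd.mul_left (Dvd.dvd.mul_right hd _) _
  set s := (j-1).factorization 2 with hs
  set t := (j-1) / 2^s with ht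
  have hj1 : j - 1 ≠ 0 := by omega
  have hst : 2^s * t = j - 1 := Nat.ordProj_mul_ordCompl_eq_self (j-1) 2
  have htodd : ¬ 2 ∣ t := Nat.not_dvd_ordCompl Nat.prime_two hj1
  have hs2 : 2^s ≤ j - 1 := Nat.ordProj_le 2 hj1
  have hsle : s ≤ j - 2 := by
    have := Nat.lt_two_pow_self (n := s)
    omega
  by_cases hrs : r ≤ s
  · have h2r : 2^r ≤ 2^s := Nat.pow_le_pow_right (by norm_num) hrs
    have hrr : r < 2^r := Nat.lt_two_pow_self (n := r)
    have hjr : r + 2 ≤ j := by omega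
    exact Dvd.dvd.mul_right (pow_dvd_pow 2 hjr) _
  · push_neg at hrs
    have h1 : 2^s * 2^(r-s) ∣ 2^s * (Nat.choose p j * (j * t)) := by
      have hsplit : 2^s * 2^(r-s) = 2^r := by
        rw [← pow_add]; congr 1; omega
      rw [hsplit]
      calc (2^r : ℕ) ∣ Nat.choose p j * j * (j-1) := hdd
      _ = 2^s * (Nat.choose p j * (j * t)) := by rw [← hst]; ring
    have h2 : 2^(r-s) ∣ Nat.choose p j * (j * t) :=
      (Nat.mul_dvd_mul_iff_left (Nat.pow_pos (n := s) (by norm_num))).mp h1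
    have hcop : Nat.Coprime (2^(r-s)) (j * t) := by
      apply Nat.Coprime.pow_left
      refine (Nat.prime_two.coprime_iff_not_dvd).mpr ?_
      intro hh
      rcases (Nat.Prime.dvd_mul Nat.prime_two).mp hh with h | h
      · rcases hjodd with ⟨c, hc⟩; omega
      · exact htodd h
    have h3 : 2^(r-s) ∣ Nat.choose p j := hcop.dvd_of_dvd_mul_right h2
    obtain ⟨c, hc⟩ := h3
    have hle : r + 2 ≤ j + (r - s) := by omega
    calc (2^(r+2) : ℕ) ∣ 2^(j + (r-s)) := pow_dvd_pow 2 hle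
    _ ∣ 2^(j + (r-s)) * c := Dvd.intro c rfl
    _ = 2^j * Nat.choose p j := by rw [hc, pow_add]; ring

lemma term_div_int (p j r : ℕ) (hj3 : 3 ≤ j) (hjodd : Odd j) (hjp : j ≤ p)
    (hd : 2^r ∣ p - 1) : ((2:ℤ)^(r+2)) ∣ 2^j * (Nat.choose p j : ℤ) := by
  have := term_div p j r hj3 hjodd hjp hd
  have h := Int.natCast_dvd_natCast.mpr this
  push_cast at h
  exact h


lemma extract (p : ℕ) (hp : 5 ≤ p) (a b : ℤ) (hb : b = 2 ∨ b = -2)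
    (hE : ((⟨a,b⟩:ZI)^p).im = 2) (M : ℕ)
    (hM : ∀ j, Odd j → 5 ≤ j → j ≤ p → (2^M:ℤ) ∣ 2^j * (Nat.choose p j : ℤ)) :
    (2^M:ℤ) ∣ 2 - p*b*a^(p-1) + b^3*(Nat.choose p 3 :ℤ)*a^(p-3) := by
  rw [im_pow_eq_sum] at hE
  set f : ℕ → ℤ := fun k => a^k * b^(p-k) * (Nat.choose p k : ℤ) * g (p-k) with hf
  have h1 : (p-1) ∈ range (p+1) := by
    simp only [mem_range]; omega
  have h3 : (p-3) ∈ (range (p+1)).erase (p-1) := by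
    simp only [mem_erase, mem_range]; omega
  rw [← Finset.add_sum_erase _ f h1, ← Finset.add_sum_erase _ f h3] at hE
  have e1 : p - (p-1) = 1 := by omega
  have e3 : p - (p-3) = 3 := by omega
  have hc1 : Nat.choose p (p-1) = p := by
    rw [show p - 1 = p - 1 from rfl, Nat.choose_symm (by omega : 1 ≤ p), Nat.choose_one_right]
  have hc3 : Nat.choose p (p-3) = Nat.choose p 3 := by
    rw [Nat.choose_symm (by omega : 3 ≤ p)]
  have hg1 : g 1 = 1 := by rw [g_eq]; norm_num
  have hg3 : g 3 = -1 := by rw [g_eq]; norm_num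
  have hf1 : f (p-1) = p*b*a^(p-1) := by
    simp only [hf, e1, hc1, hg1]
    ring
  have hf3 : f (p-3) = -(b^3*(Nat.choose p 3:ℤ)*a^(p-3)) := by
    simp only [hf, e3, hc3, hg3]
    ring
  have htarget : 2 - (p:ℤ)*b*a^(p-1) + b^3*(Nat.choose p 3 :ℤ)*a^(p-3)
      = ∑ k ∈ ((range (p+1)).erase (p-1)).erase (p-3), f k := by
    rw [hf1, hf3] at hE
    linarith [hE]
  rw [htarget]
  apply Finset.dvd_sum
  intro k hk
  simp only [mem_erase, mem_range] at hk
  obtain ⟨hk3, hk1, hkr⟩ := hk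
  set j := p - k with hj
  have hkp : k ≤ p := by omega
  have hj1 : j ≠ 1 := by omega
  have hj3 : j ≠ 3 := by omega
  have hjp : j ≤ p := by omega
  rcases Nat.even_or_odd j with hje | hjo
  · -- g j = 0
    have : g j = 0 := by
      rw [g_eq]
      obtain ⟨c, hc⟩ := hje
      have : j % 4 = 0 ∨ j % 4 = 2 := by omega
      rcases this with h | h <;> simp [h]
    simp only [hf, ← hj, this, mul_zero]
    exact dvd_zero _
  · have hj5 : 5 ≤ j := by
      obtain ⟨c, hc⟩ := hjo
      omega
    have hdvd : (2^M:ℤ) ∣ b^j * (Nat.choose p j : ℤ) := by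
      rcases hb with rfl | rfl
      · exact hM j hjo hj5 hjp
      · rw [hjo.neg_pow, neg_mul]
        exact dvd_neg.mpr (hM j hjo hj5 hjp)
    have hcs : (Nat.choose p j : ℤ) = (Nat.choose p k : ℤ) := by
      rw [hj, Nat.choose_symm hkp]
    have : f k = (b^j*(Nat.choose p j:ℤ)) * (a^k * g j) := by
      simp only [hf, hcs, ← hj]; ring
    rw [this]
    exact hdvd.mul_right _


lemma key (γ : ZI) (Q : ℤ) (hQ : γ * star γ = (Q:ZI)) (m w δ : ℕ) :
    (γ^m + (star γ)^m) ∣ γ^(δ + 2*m*w) - γ^δ * ((-((Q:ZI))^m)^w) := by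
  have hQm : γ^m * (star γ)^m = ((Q:ZI))^m := by rw [← mul_pow, hQ]
  have hbase : γ^(2*m) - (-((Q:ZI))^m) = (γ^m + (star γ)^m) * γ^m := by
    rw [two_mul, pow_add]
    linear_combination - hQm
  have h2 : (γ^m + (star γ)^m) ∣ (γ^(2*m))^w - (-((Q:ZI))^m)^w :=
    dvd_trans ⟨γ^m, hbase⟩ (sub_dvd_pow_sub_pow _ _ w)
  have h3 : γ^(δ + 2*m*w) - γ^δ * ((-((Q:ZI))^m)^w)
      = γ^δ * ((γ^(2*m))^w - (-((Q:ZI))^m)^w) := by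
    rw [pow_add, pow_mul]
    ring
  rw [h3]
  exact Dvd.dvd.mul_left h2 _

lemma comp_dvd (c x y : ℤ) (h : ((c:ZI)) ∣ (⟨x,y⟩:ZI)) : c ∣ x ∧ c ∣ y := by
  rw [Zsqrtd.intCast_dvd] at h
  exact h

lemma norm_pow (z : ZI) (n : ℕ) : (z^n).norm = z.norm ^ n := by
  induction n with
  | zero => simp
  | succ n ih => rw [pow_succ, Zsqrtd.norm_mul, ih, pow_succ]

lemma b_dvd_im (a b : ℤ) (n : ℕ) : b ∣ ((⟨a,b⟩:ZI)^n).im := by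
  induction n with
  | zero => simp
  | succ n ih =>
      rw [pow_succ, Zsqrtd.im_mul]
      exact dvd_add (Dvd.intro_left _ rfl) (ih.mul_right _)

lemma norm_mk (x y : ℤ) : (⟨x,y⟩:ZI).norm = x^2 + y^2 := by
  rw [Zsqrtd.norm_def]
  ring

lemma gamma (A y : ℤ) (hA : Odd A) (n : ℕ) (hn : Odd n) (h : A^2 + 4 = y^n) :
    ∃ γ : ZI, γ^n = ⟨A, 2⟩ := by
  have hmul : (⟨A,2⟩:ZI) * ⟨A,-2⟩ = ((y:ZI))^n := by
    have h0 : (⟨A,2⟩:ZI) * ⟨A,-2⟩ = ⟨A^2+4, 0⟩ := by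
      ext <;> simp [Zsqrtd.re_mul, Zsqrtd.im_mul] <;> ring
    have h0' : (⟨A^2+4, 0⟩ : ZI) = ((A^2+4 : ℤ) : ZI) := by
      ext
      · exact (Zsqrtd.re_intCast _).symm
      · exact (Zsqrtd.im_intCast _).symm
    rw [h0, h0', h]
    push_cast
    ring
  have hAodd : Odd (A^2 + 4) := by
    rcases hA with ⟨c, rfl⟩
    exact ⟨2*c^2 + 2*c + 2, by ring⟩
  have hgcd : IsUnit (gcd (⟨A,2⟩:ZI) ⟨A,-2⟩) := by
    set d := gcd (⟨A,2⟩:ZI) ⟨A,-2⟩ with hd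
    have h1 : d ∣ ⟨A,2⟩ := gcd_dvd_left _ _
    have h2 : d ∣ ⟨A,-2⟩ := gcd_dvd_right _ _
    have h4 : d ∣ ⟨0,4⟩ := by
      have h5 : (⟨0,4⟩:ZI) = (⟨A,2⟩:ZI) - ⟨A,-2⟩ := by ext <;> simp
      rw [h5]
      exact dvd_sub h1 h2
    have hn1 : d.norm ∣ 16 := by
      obtain ⟨e, he⟩ := h4
      have h6 := congrArg Zsqrtd.norm he
      rw [Zsqrtd.norm_mul, norm_mk] at h6
      norm_num at h6
      exact ⟨e.norm, h6⟩
    have hn2 : d.norm ∣ A^2 + 4 := by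
      obtain ⟨e, he⟩ := h1
      have h6 := congrArg Zsqrtd.norm he
      rw [Zsqrtd.norm_mul, norm_mk] at h6
      exact ⟨e.norm, by linarith [h6]⟩
    have hna1 : d.norm.natAbs ∣ 16 := by
      have := Int.natAbs_dvd_natAbs.mpr hn1
      simpa using this
    have hna2 : d.norm.natAbs ∣ (A^2+4).natAbs := Int.natAbs_dvd_natAbs.mpr hn2
    have hodd : ¬ 2 ∣ d.norm.natAbs := by
      intro h2d
      have h7 : (2:ℤ).natAbs ∣ (A^2+4).natAbs := dvd_trans (by simpa using h2d) hna2
      have h8 : (2:ℤ) ∣ A^2+4 := Int.natAbs_dvd_natAbs.mp h7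
      obtain ⟨t, ht⟩ := h8
      rcases hAodd with ⟨c, hc⟩
      omega
    have hcop : Nat.Coprime d.norm.natAbs 2 :=
      ((Nat.Prime.coprime_iff_not_dvd Nat.prime_two).mpr hodd).symm
    have h1' : d.norm.natAbs = 1 := by
      have : Nat.Coprime d.norm.natAbs 16 := by
        have := hcop.pow_right 4
        norm_num at this
        exact this
      exact Nat.Coprime.eq_one_of_dvd this hna1
    exact Zsqrtd.norm_eq_one_iff.mp h1'
  obtain ⟨δ, hδ⟩ := exists_associated_pow_of_mul_eq_pow hgcd hmul
  obtain ⟨u, hu⟩ := hδ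
  -- classify the unit u
  have hnu : ((u:ZI)).norm.natAbs = 1 := Zsqrtd.norm_eq_one_iff.mpr u.isUnit
  set r := ((u:ZI)).re with hr
  set i := ((u:ZI)).im with hi
  have hnu2 : r^2 + i^2 = 1 := by
    have h9 : ((u:ZI)).norm = r^2 + i^2 := by
      rw [Zsqrtd.norm_def]; ring
    have h10 : ((u:ZI)).norm = 1 ∨ ((u:ZI)).norm = -1 := Int.natAbs_eq_iff.mp hnu |>.imp
      (fun h => by exact_mod_cast h) (fun h => by exact_mod_cast h)
    rcases h10 with h10 | h10
    · rw [h9] at h10; exact h10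
    · exfalso; nlinarith [sq_nonneg r, sq_nonneg i, h9 ▸ h10]
  have hcases : ((u:ZI)) = 1 ∨ ((u:ZI)) = -1 ∨ ((u:ZI)) = ii ∨ ((u:ZI)) = -ii := by
    have hsq : r^2 ≤ 1 := by nlinarith [sq_nonneg i]
    have hub : r ≤ 1 := by nlinarith
    have hlb : -1 ≤ r := by nlinarith
    have hr1 : r = 1 ∨ r = -1 ∨ r = 0 := by omega
    rcases hr1 with h | h | h
    · left; ext
      · rw [← hr, h]; simp
      · have : i = 0 := by nlinarith
        rw [← hi, this]; simp
    · right; left; ext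
      · rw [← hr, h]; simp
      · have : i = 0 := by nlinarith
        rw [← hi, this]; simp
    · have hi1 : i = 1 ∨ i = -1 := by
        have : i^2 = 1 := by nlinarith
        have h11 : (i-1)*(i+1) = 0 := by linear_combination this
        rcases mul_eq_zero.mp h11 with h12 | h12
        · left; linarith
        · right; linarith
      rcases hi1 with h13 | h13
      · right; right; left; ext
        · rw [← hr, h]; simp [ii]
        · rw [← hi, h13]; simp [ii]
      · right; right; right; ext
        · rw [← hr, h]; simp [ii]
        · rw [← hi, h13]; simp [ii]
  -- find v with v^n = u
  have hmod : n % 4 = 1 ∨ n % 4 = 3 := by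
    rcases hn with ⟨c, hc⟩; omega
  have hii3 : ii^3 = -ii := by
    rw [show (3:ℕ) = 2+1 from rfl, pow_add, ii_sq]; ring
  have hv : ∃ v : ZI, v^n = (u:ZI) := by
    rcases hcases with hc | hc | hc | hc
    · exact ⟨1, by rw [one_pow, hc]⟩
    · exact ⟨-1, by rw [hc, hn.neg_pow, one_pow]⟩
    · rcases hmod with h14 | h14
      · exact ⟨ii, by rw [ii_pow_mod, h14, pow_one, hc]⟩
      · refine ⟨-ii, ?_⟩
        rw [hc, hn.neg_pow, ii_pow_mod, h14, hii3, neg_neg]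
    · rcases hmod with h14 | h14
      · exact ⟨-ii, by rw [hc, hn.neg_pow, ii_pow_mod, h14, pow_one]⟩
      · refine ⟨ii, ?_⟩
        rw [hc, ii_pow_mod, h14, hii3]
  obtain ⟨v, hv⟩ := hv
  refine ⟨δ * v, ?_⟩
  rw [mul_pow, hv, hu]


lemma cube_re_im (a b : ℤ) : (⟨a,b⟩:ZI)^3 = ⟨a^3 - 3*a*b^2, 3*a^2*b - b^3⟩ := by
  ext <;> simp [pow_succ, Zsqrtd.re_mul, Zsqrtd.im_mul] <;> ring

lemma sq_eq_one (a : ℤ) (h : a^2 = 1) : a = 1 ∨ a = -1 := by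
  have h1 : (a-1)*(a+1) = 0 := by linear_combination h
  rcases mul_eq_zero.mp h1 with h2 | h2
  · left; linarith
  · right; linarith

lemma mordell (A y : ℤ) (hA : 1 ≤ A) (hAodd : Odd A) (h : A^2 + 4 = y^3) : A = 11 := by
  obtain ⟨γ, hg0⟩ := gamma A y hAodd 3 ⟨1, by norm_num⟩ h
  obtain ⟨a, b⟩ := γ
  have hnorm : (a^2+b^2)^3 = A^2 + 4 := by
    have h1 := congrArg Zsqrtd.norm hg0
    rw [norm_pow, norm_mk, norm_mk] at h1
    norm_num at h1
    exact h1
  have hg := hg0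
  rw [cube_re_im] at hg
  have hre : a^3 - 3*a*b^2 = A := congrArg Zsqrtd.re hg
  have him : 3*a^2*b - b^3 = 2 := congrArg Zsqrtd.im hg
  have hnodd : Odd (a^2+b^2) := by
    have h2 : Odd ((a^2+b^2)^3) := by
      rw [hnorm]
      rcases hAodd with ⟨c, rfl⟩
      exact ⟨2*c^2+2*c+2, by ring⟩
    rcases Int.even_or_odd (a^2+b^2) with he | ho
    · exfalso
      have h3 : Even ((a^2+b^2)^3) := Int.even_pow.mpr ⟨he, by norm_num⟩
      exact (Int.not_odd_iff_even.mpr h3) h2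
    · exact ho
  have hbdvd : b ∣ 2 := ⟨3*a^2 - b^2, by linarith [him]⟩
  have hb4 : b = 1 ∨ b = -1 ∨ b = 2 ∨ b = -2 := by
    have h1 : b.natAbs ∣ (2:ℤ).natAbs := Int.natAbs_dvd_natAbs.mpr hbdvd
    have h2 : b.natAbs ≤ 2 := Nat.le_of_dvd (by norm_num) (by simpa using h1)
    have h3 : b.natAbs ≠ 0 := by
      intro h4
      have h5 : b = 0 := Int.natAbs_eq_zero.mp h4
      rw [h5] at him
      norm_num at him
    rcases Int.natAbs_eq b with h5 | h5 <;> omega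
  rcases hb4 with rfl | rfl | rfl | rfl
  · have ha2 : a^2 = 1 := by nlinarith [him]
    rcases hnodd with ⟨c, hc⟩
    rw [ha2] at hc
    norm_num at hc
    omega
  · have ha2 : (3:ℤ)*a^2 = -1 := by nlinarith [him]
    nlinarith [sq_nonneg a]
  · have ha3 : (3:ℤ)*a^2 = 5 := by nlinarith [him]
    have h9 : (3:ℤ) ∣ 5 := ⟨a^2, by linarith⟩
    norm_num at h9
  · have ha2 : a^2 = 1 := by nlinarith [him]
    rcases sq_eq_one a ha2 with rfl | rfl
    · exfalso; norm_num at hre; omega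
    · norm_num at hre; omega


lemma sub_star (z : ZI) : z - star z = ⟨0, 2*z.im⟩ := by
  ext <;> simp <;> ring

lemma add_star (z : ZI) : z + star z = ⟨2*z.re, 0⟩ := by
  ext <;> simp <;> ring

lemma cast_mul_mk (c x y : ℤ) : (c:ZI) * ⟨x,y⟩ = ⟨c*x, c*y⟩ := by
  ext <;> simp [Zsqrtd.re_mul, Zsqrtd.im_mul]

lemma mk_sub_mk (x y u v : ℤ) : (⟨x,y⟩:ZI) - ⟨u,v⟩ = ⟨x-u, y-v⟩ := by
  ext <;> simp

lemma key_im (γ : ZI) (Q : ℤ) (hQ : γ * star γ = (Q:ZI)) (m w δ : ℕ) (W : ℤ)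
    (hV : γ^m + (star γ)^m = ((2*W : ℤ):ZI)) :
    W ∣ (γ^(δ+2*m*w)).im - ((-Q^m)^w) * (γ^δ).im := by
  have h1 := key γ Q hQ m w δ
  have hQ' : (star γ) * star (star γ) = (Q:ZI) := by
    rw [star_star, mul_comm]; exact hQ
  have h2 := key (star γ) Q hQ' m w δ
  rw [show (star γ)^m + (star (star γ))^m = γ^m + (star γ)^m by rw [star_star]; ring] at h2
  rw [hV] at h1 h2
  have h3 : ((2*W:ℤ):ZI) ∣ (γ^(δ+2*m*w) - (star γ)^(δ+2*m*w))
      - ((-((Q:ZI))^m)^w) * (γ^δ - (star γ)^δ) := by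
    have h0 := dvd_sub h1 h2
    convert h0 using 1
    ring
  have e2 : ((-((Q:ZI))^m)^w) = (((-Q^m)^w : ℤ) : ZI) := by push_cast; ring
  have e1 : γ^(δ+2*m*w) - (star γ)^(δ+2*m*w) = (⟨0, 2*(γ^(δ+2*m*w)).im⟩ : ZI) := by
    rw [← star_pow]; exact sub_star _
  have e3 : γ^δ - (star γ)^δ = (⟨0, 2*(γ^δ).im⟩ : ZI) := by
    rw [← star_pow]; exact sub_star _
  rw [e1, e3, e2, cast_mul_mk, mk_sub_mk] at h3
  have h4 : (0 - (-Q^m)^w * 0 : ℤ) = 0 := by ring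
  rw [h4] at h3
  have h5 := (comp_dvd _ _ _ h3).2
  obtain ⟨c, hc⟩ := h5
  refine ⟨c, by linarith⟩

lemma key_re (γ : ZI) (Q : ℤ) (hQ : γ * star γ = (Q:ZI)) (m w δ : ℕ) (W : ℤ)
    (hV : γ^m + (star γ)^m = ((2*W : ℤ):ZI)) :
    W ∣ (γ^(δ+2*m*w)).re - ((-Q^m)^w) * (γ^δ).re := by
  have h1 := key γ Q hQ m w δ
  have hQ' : (star γ) * star (star γ) = (Q:ZI) := by
    rw [star_star, mul_comm]; exact hQ
  have h2 := key (star γ) Q hQ' m w δ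
  rw [show (star γ)^m + (star (star γ))^m = γ^m + (star γ)^m by rw [star_star]; ring] at h2
  rw [hV] at h1 h2
  have h3 : ((2*W:ℤ):ZI) ∣ (γ^(δ+2*m*w) + (star γ)^(δ+2*m*w))
      - ((-((Q:ZI))^m)^w) * (γ^δ + (star γ)^δ) := by
    have h0 := dvd_add h1 h2
    convert h0 using 1
    ring
  have e2 : ((-((Q:ZI))^m)^w) = (((-Q^m)^w : ℤ) : ZI) := by push_cast; ring
  have e1 : γ^(δ+2*m*w) + (star γ)^(δ+2*m*w) = (⟨2*(γ^(δ+2*m*w)).re, 0⟩ : ZI) := by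
    rw [← star_pow]; exact add_star _
  have e3 : γ^δ + (star γ)^δ = (⟨2*(γ^δ).re, 0⟩ : ZI) := by
    rw [← star_pow]; exact add_star _
  rw [e1, e3, e2, cast_mul_mk, mk_sub_mk] at h3
  have h4 : ((-Q^m)^w * 0 : ℤ) = 0 := by ring
  rw [h4] at h3
  have h5 := (comp_dvd _ _ _ h3).1
  obtain ⟨c, hc⟩ := h5
  refine ⟨c, by linarith⟩


lemma jacobi_kill (a : ℤ) (haodd : Odd a) (ha9 : 9 ≤ a^2)
    (w : ℕ) (hdvd : (a^2-4) ∣ 1 + (-(a^2+4)^2)^w * (3*a^2-4)) : False := by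
  set N : ℕ := (a^2-4).toNat with hN
  have hNZ : (N:ℤ) = a^2 - 4 := Int.toNat_of_nonneg (by linarith)
  obtain ⟨t, ht⟩ := odd_sq_sub_one a haodd
  obtain ⟨s, hs⟩ : ∃ s, a^2 = s := ⟨_, rfl⟩
  rw [hs] at hNZ ht ha9 hdvd
  have hmod8 : N % 8 = 5 := by omega
  have hNodd : Odd N := by
    rcases Nat.even_or_odd N with he | ho
    · exfalso; obtain ⟨u, hu⟩ := he; omega
    · exact ho
  have hQ8 : (s+4) ≡ 8 [ZMOD (N:ℤ)] := by
    have : ((N:ℤ)) ∣ (8 - (s+4)) := ⟨-1, by linarith⟩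
    exact (Int.modEq_iff_dvd.mpr this)
  have h34 : (3*s-4) ≡ 8 [ZMOD (N:ℤ)] := by
    have : ((N:ℤ)) ∣ (8 - (3*s-4)) := ⟨-3, by linarith⟩
    exact (Int.modEq_iff_dvd.mpr this)
  have hc : ((-(s+4)^2)^w : ℤ) ≡ (-(8:ℤ)^2)^w [ZMOD (N:ℤ)] :=
    ((hQ8.pow 2).neg).pow w
  have hsum : (1 + (-(s+4)^2)^w * (3*s-4) : ℤ) ≡ 1 + (-(8:ℤ)^2)^w * 8 [ZMOD (N:ℤ)] :=
    (Int.ModEq.refl 1).add (hc.mul h34)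
  have hzero : (0:ℤ) ≡ 1 + (-(8:ℤ)^2)^w * 8 [ZMOD (N:ℤ)] := by
    refine Int.ModEq.trans ?_ hsum
    have hd : ((N:ℤ)) ∣ (1 + (-(s+4)^2)^w * (3*s-4)) - 0 := by
      rw [hNZ]; simpa using hdvd
    exact Int.modEq_iff_dvd.mpr hd
  -- so X := (-1)^(w+1) * 2^(6w+3) ≡ 1 [ZMOD N]
  have hX : ((-1:ℤ))^(w+1) * 2^(6*w+3) ≡ 1 [ZMOD (N:ℤ)] := by
    have he : ((-1:ℤ))^(w+1) * 2^(6*w+3) - 1 = -(1 + (-(8:ℤ)^2)^w * 8) + 0 := by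
      have h82 : (-(8:ℤ)^2) = -1 * 2^6 := by norm_num
      rw [h82, mul_pow, ← pow_mul, pow_succ, pow_add]
      ring
    have hd : ((N:ℤ)) ∣ (1 : ℤ) - ((-1:ℤ))^(w+1) * 2^(6*w+3) := by
      have := Int.ModEq.dvd hzero
      -- this : N ∣ (1 + (-64)^w*8) - 0
      have h2 : ((N:ℤ)) ∣ (1 + (-(8:ℤ)^2)^w * 8) := by simpa using this
      have h3 : (1:ℤ) - ((-1:ℤ))^(w+1) * 2^(6*w+3) = (1 + (-(8:ℤ)^2)^w * 8) := by
        linarith [he]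
      rw [h3]; exact h2
    exact (Int.modEq_iff_dvd.mpr hd)
  have hJ : jacobiSym (((-1:ℤ))^(w+1) * 2^(6*w+3)) N = jacobiSym 1 N :=
    jacobiSym.mod_left' hX
  rw [jacobiSym.one_left, jacobiSym.mul_left, jacobiSym.pow_left, jacobiSym.pow_left,
    jacobiSym.at_neg_one hNodd, jacobiSym.at_two hNodd,
    ZMod.χ₄_nat_eq_if_mod_four, ZMod.χ₈_nat_eq_if_mod_eight] at hJ
  have h1 : N % 2 = 1 := by omega
  have h4 : N % 4 = 1 := by omega
  rw [if_neg (by omega), if_pos h4, one_pow, if_neg (by omega), if_neg (by omega), one_mul] at hJ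
  have : ((-1:ℤ))^(6*w+3) = -1 := Odd.neg_one_pow ⟨3*w+1, by ring⟩
  rw [this] at hJ
  norm_num at hJ


lemma cast_mk (c : ℤ) : (c:ZI) = ⟨c, 0⟩ := by
  ext
  · exact Zsqrtd.re_intCast c
  · exact Zsqrtd.im_intCast c

lemma sq_mk (a b : ℤ) : (⟨a,b⟩:ZI)^2 = ⟨a^2-b^2, 2*a*b⟩ := by
  ext <;> simp [pow_two, Zsqrtd.re_mul, Zsqrtd.im_mul] <;> ring

lemma V_from_even_pow (γ : ZI) (m : ℕ) :
    γ^m + (star γ)^m = ((2*(γ^m).re : ℤ):ZI) := by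
  rw [← star_pow, add_star, cast_mk]

lemma odd_A24 (A : ℤ) (h : Odd A) : Odd (A^2+4) := by
  rcases h with ⟨c, rfl⟩
  exact ⟨2*c^2+2*c+2, by ring⟩

lemma caseA (p : ℕ) (hp : 5 ≤ p) (a : ℤ) (haodd : Odd a)
    (hE : ((⟨a,2⟩:ZI)^p).im = 2) (hp4 : p % 4 = 1) : False := by
  have hstep : ∀ r, 2 ≤ r → 2^r ∣ (p - 1) → 2^(r+1) ∣ (p - 1) := by
    intro r hr hdvd
    have hext := extract p hp a 2 (Or.inl rfl) hE (r+2) (fun j hjo hj5 hjp =>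
      term_div_int p j r (by omega) hjo hjp hdvd)
    have h3d := term_div_int p 3 r (le_refl 3) ⟨1, by norm_num⟩ (by omega) hdvd
    have hC : ((2:ℤ)^(r+2)) ∣ (2:ℤ)^3*(Nat.choose p 3:ℤ)*a^(p-3) :=
      h3d.mul_right _
    have hpow := odd_pow_mod a haodd r (p-1) (by omega) hdvd
    have h2p : ((2:ℤ)^(r+2)) ∣ 2 - (p:ℤ)*2*a^(p-1) := by
      have hd := dvd_sub hext hC
      convert hd using 1
      case e'_2 => rfl
      push_cast
      ring
    have hmul : ((2:ℤ)^(r+2)) ∣ ((p:ℤ)*2)*(a^(p-1) - 1) := hpow.mul_left _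
    have hfin : ((2:ℤ)^(r+2)) ∣ 2*(1 - (p:ℤ)) := by
      have hd := dvd_add h2p hmul
      convert hd using 1
      case e'_2 => rfl
      ring
    have hfin2 : ((2:ℤ)^(r+1)) ∣ 1 - (p:ℤ) := by
      have he : ((2:ℤ)^(r+2)) = 2*2^(r+1) := by ring
      rw [he] at hfin
      exact (mul_dvd_mul_iff_left (two_ne_zero (α := ℤ))).mp hfin
    have hfin3 : ((2:ℤ)^(r+1)) ∣ ((p-1 : ℕ) : ℤ) := by
      have he : ((p-1:ℕ):ℤ) = -(1 - (p:ℤ)) := by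
        push_cast [Nat.cast_sub (by omega : 1 ≤ p)]
        ring
      rw [he]
      exact dvd_neg.mpr hfin2
    exact_mod_cast hfin3
  have hall : ∀ r, 2 ≤ r → 2^r ∣ (p-1) := by
    intro r
    induction r with
    | zero => omega
    | succ n ih =>
        intro hn
        rcases Nat.lt_or_ge n 2 with hn2 | hn2
        · have he : n = 1 := by omega
          subst he
          omega
        · exact hstep n hn2 (ih hn2)
  have hbig := hall p (by omega)
  have hlt := Nat.lt_two_pow_self (n := p)
  have := Nat.le_of_dvd (by omega) hbig
  omega


lemma c3_odd (p : ℕ) (hp5 : 5 ≤ p) (hp4 : p % 4 = 3) : ¬ 2 ∣ Nat.choose p 3 := by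
  intro h2
  obtain ⟨u, hu⟩ := h2
  have hid := choose_identity p 3 (by omega) (by omega)
  rw [show (3:ℕ)-2 = 1 from rfl, Nat.choose_one_right] at hid
  obtain ⟨sS, hS⟩ : ∃ sS, p = 4*sS+3 := ⟨p/4, by omega⟩
  have e1 : p - 1 = 4*sS+2 := by omega
  have e2 : p - 2 = 4*sS+1 := by omega
  rw [e1, e2, hu] at hid
  have hid2 : 2*(u*6) = 2*(p*((2*sS+1)*(4*sS+1))) := by
    calc 2*(u*6) = 2*u*3*(3-1) := by ring
    _ = p*((4*sS+2)*(4*sS+1)) := hid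
    _ = 2*(p*((2*sS+1)*(4*sS+1))) := by ring
  have hid3 : u*6 = p*((2*sS+1)*(4*sS+1)) :=
    Nat.eq_of_mul_eq_mul_left (by norm_num) hid2
  have ho : Odd (p*((2*sS+1)*(4*sS+1))) := by
    refine Odd.mul ⟨2*sS+1, by omega⟩ (Odd.mul ⟨sS, by ring⟩ ⟨2*sS, by ring⟩)
  obtain ⟨v, hv⟩ := ho
  omega

lemma gam_sq (a : ℤ) : (⟨a,-2⟩:ZI)^2 = ⟨a^2-4, -4*a⟩ := by
  rw [sq_mk]
  ext <;> simp <;> ring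

lemma gam_pow4 (a : ℤ) (ha2 : a^2 = 1) : (⟨a,-2⟩:ZI)^4 = ⟨-7, 24*a⟩ := by
  rw [show (4:ℕ) = 2*2 from rfl, pow_mul, gam_sq, sq_mk]
  have e1 : (a^2-4)^2 - (-4*a)^2 = -7 := by linear_combination (a^2 - 23) * ha2
  have e2 : 2*(a^2-4)*(-4*a) = 24*a := by linear_combination (-8*a) * ha2
  rw [e1, e2]

lemma gam_pow5 (a : ℤ) (ha2 : a^2 = 1) : (⟨a,-2⟩:ZI)^5 = ⟨41*a, 38⟩ := by
  rw [show (5:ℕ) = 4+1 from rfl, pow_succ, gam_pow4 a ha2]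
  ext
  · simp [Zsqrtd.re_mul]
    ring
  · simp [Zsqrtd.im_mul]
    linear_combination 24 * ha2

lemma gam_pow8 (a : ℤ) (ha2 : a^2 = 1) : (⟨a,-2⟩:ZI)^8 = ⟨-527, -336*a⟩ := by
  rw [show (8:ℕ) = 4*2 from rfl, pow_mul, gam_pow4 a ha2, sq_mk]
  have e1 : (-7:ℤ)^2 - (24*a)^2 = -527 := by linear_combination (-576) * ha2
  have e2 : (2:ℤ)*(-7)*(24*a) = -336*a := by ring
  rw [e1, e2]


lemma zmod31_kill (w : ℕ) (h : (527:ℤ) ∣ 1 - (-(5:ℤ)^8)^w) : 3 ∣ w := by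
  have h31 : (31:ℤ) ∣ 1 - (-(5:ℤ)^8)^w := dvd_trans ⟨17, by norm_num⟩ h
  have hz : ((1 - (-(5:ℤ)^8)^w : ℤ) : ZMod 31) = 0 :=
    (ZMod.intCast_zmod_eq_zero_iff_dvd _ 31).mpr h31
  push_cast at hz
  have h6 : ((-390625 : ZMod 31)) = 6 := by decide
  rw [h6] at hz
  have hz' : (6 : ZMod 31)^w = 1 := by
    have := sub_eq_zero.mp hz
    exact this.symm
  have h66 : (6 : ZMod 31)^6 = 1 := by decide
  have hw : (6 : ZMod 31)^(w % 6) = 1 := by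
    conv at hz' => rw [← Nat.div_add_mod w 6]
    rw [pow_add, pow_mul, h66, one_pow, one_mul] at hz'
    exact hz'
  have hlt : w % 6 < 6 := Nat.mod_lt _ (by norm_num)
  have hcases : w % 6 = 0 ∨ w % 6 = 1 ∨ w % 6 = 2 ∨ w % 6 = 3 ∨ w % 6 = 4 ∨ w % 6 = 5 := by
    omega
  rcases hcases with h0 | h0 | h0 | h0 | h0 | h0
  · omega
  all_goals (rw [h0] at hw; exfalso; revert hw; decide)

lemma zmod17_kill (a A : ℤ) (ha : a = 1 ∨ a = -1) (c : ℤ) (hc : (c : ZMod 17) = 1)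
    (h1 : (17:ℤ) ∣ 38*A + 82*a) (h2 : (17:ℤ) ∣ (41*a*A - 76) - c) : False := by
  have z1 : ((38*A + 82*a : ℤ) : ZMod 17) = 0 := (ZMod.intCast_zmod_eq_zero_iff_dvd _ _).mpr h1
  have z2 : ((41*a*A - 76 - c : ℤ) : ZMod 17) = 0 := (ZMod.intCast_zmod_eq_zero_iff_dvd _ _).mpr h2
  push_cast at z1 z2
  rw [hc] at z2
  obtain ⟨x, hx⟩ : ∃ x : ZMod 17, (A:ZMod 17) = x := ⟨_, rfl⟩
  rw [hx] at z1 z2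
  clear hx hc h1 h2
  rcases ha with rfl | rfl
  · push_cast at z1 z2
    revert z2
    revert z1
    revert x
    decide
  · push_cast at z1 z2
    revert z2
    revert z1
    revert x
    decide


lemma cast_mul_ii (b : ℤ) : (b:ZI)*ii = ⟨0,b⟩ := by
  rw [cast_mk]
  ext <;> simp [ii, Zsqrtd.re_mul, Zsqrtd.im_mul]

lemma case_b1 (A a b : ℤ) (p : ℕ) (hp5 : 5 ≤ p) (hpodd : Odd p) (hb : b = 1 ∨ b = -1)
    (haev : Even a) (hg0 : (⟨a,b⟩:ZI)^p = ⟨A,2⟩) : False := by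
  have hsub : ((a:ZI)) ∣ (⟨a,b⟩:ZI)^p - ((b:ZI)*ii)^p := by
    have hγ : (⟨a,b⟩:ZI) - (b:ZI)*ii = (a:ZI) := by rw [mk_eq]; ring
    have hd := sub_dvd_pow_sub_pow (⟨a,b⟩:ZI) ((b:ZI)*ii) p
    rwa [hγ] at hd
  have hmod : p % 4 = 1 ∨ p % 4 = 3 := by rcases hpodd with ⟨c,hc⟩; omega
  have hbp : (b:ZI)^p = (b:ZI) := by
    rcases hb with rfl | rfl
    · norm_num
    · push_cast
      rw [hpodd.neg_pow]
      norm_num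
  have hii3 : ii^3 = -ii := by
    rw [show (3:ℕ) = 2+1 from rfl, pow_add, ii_sq]; ring
  have hbi : ((b:ZI)*ii)^p = ⟨0, b⟩ ∨ ((b:ZI)*ii)^p = ⟨0, -b⟩ := by
    rw [mul_pow, hbp]
    rcases hmod with h4 | h4
    · left
      rw [ii_pow_mod, h4, pow_one, cast_mul_ii]
    · right
      rw [ii_pow_mod, h4, hii3]
      have he : (b:ZI) * (-ii) = -((b:ZI)*ii) := by ring
      rw [he, cast_mul_ii]
      ext <;> simp
  have h2b : a ∣ 2 - b ∨ a ∣ 2 + b := by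
    rcases hbi with hbi | hbi <;> rw [hg0, hbi, mk_sub_mk] at hsub
    · exact Or.inl (comp_dvd _ _ _ hsub).2
    · right
      have hx := (comp_dvd _ _ _ hsub).2
      rw [sub_neg_eq_add] at hx
      exact hx
  have h13 : a ∣ 1 ∨ a ∣ 3 := by
    rcases hb with rfl | rfl <;> rcases h2b with hx | hx <;> norm_num at hx <;> tauto
  have habs : a.natAbs = 1 ∨ a.natAbs = 3 := by
    rcases h13 with hx | hx
    · left
      have hx' : a.natAbs ∣ 1 := by
        have := Int.natAbs_dvd_natAbs.mpr hx
        simpa using this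
      exact Nat.dvd_one.mp hx'
    · have hx' : a.natAbs ∣ 3 := by
        have := Int.natAbs_dvd_natAbs.mpr hx
        simpa using this
      obtain ⟨n, hn⟩ : ∃ n, a.natAbs = n := ⟨_, rfl⟩
      rw [hn] at hx'
      have hle : n ≤ 3 := Nat.le_of_dvd (by norm_num) hx'
      have hn13 : n = 1 ∨ n = 3 := by
        interval_cases n <;> revert hx' <;> decide
      omega
  rcases haev with ⟨c, hc⟩
  rcases Int.natAbs_eq a with he | he <;> omega


lemma odd_cancel_two (W z : ℤ) (hW : Odd W) (h : W ∣ 2*z) : W ∣ z := by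
  obtain ⟨k, hk⟩ := h
  have hev : Even (W*k) := ⟨z, by linarith⟩
  rcases Int.even_mul.mp hev with he | he
  · exact absurd hW (by rwa [← Int.not_odd_iff_even] at he)
  · obtain ⟨k', hk'⟩ := he
    have hx : W*k = 2*(W*k') := by rw [hk']; ring
    exact ⟨k', by linarith⟩

lemma odd_sq_sub4 (a : ℤ) (ha : Odd a) : Odd (a^2 - 4) := by
  rcases ha with ⟨c, rfl⟩
  exact ⟨2*c^2+2*c-2, by ring⟩

lemma mul_star_mk (a b : ℤ) (hb2 : b^2 = 4) :
    (⟨a,b⟩:ZI) * star (⟨a,b⟩:ZI) = ((a^2+4:ℤ):ZI) := by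
  rw [Zsqrtd.star_mk, cast_mk]
  ext
  · simp [Zsqrtd.re_mul]
    linear_combination hb2
  · simp [Zsqrtd.im_mul]
    ring

lemma core (A y : ℤ) (hAodd : Odd A) (p : ℕ) (hp : p.Prime) (hp5 : 5 ≤ p)
    (h : A^2 + 4 = y^p) : False := by
  have hpodd : Odd p := hp.odd_of_ne_two (by omega)
  obtain ⟨γ, hg0⟩ := gamma A y hAodd p hpodd h
  obtain ⟨a, b⟩ := γ
  have hnorm : (a^2+b^2)^p = A^2 + 4 := by
    have h1 := congrArg Zsqrtd.norm hg0
    rw [norm_pow, norm_mk, norm_mk] at h1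
    norm_num at h1
    exact h1
  have hnodd : Odd (a^2+b^2) := by
    rcases Int.even_or_odd (a^2+b^2) with he | ho
    · exfalso
      have h3 : Even ((a^2+b^2)^p) := Int.even_pow.mpr ⟨he, by omega⟩
      rw [hnorm] at h3
      exact absurd (odd_A24 A hAodd) (by rwa [← Int.not_odd_iff_even] at h3)
    · exact ho
  have him : ((⟨a,b⟩:ZI)^p).im = 2 := by rw [hg0]
  have hbdvd : b ∣ 2 := by
    have hbi := b_dvd_im a b p
    rwa [him] at hbi
  have hb4 : b = 1 ∨ b = -1 ∨ b = 2 ∨ b = -2 := by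
    have hb0 : b ≠ 0 := by
      intro h0
      rw [h0] at hbdvd
      norm_num at hbdvd
    have h1 : b.natAbs ∣ 2 := by
      have := Int.natAbs_dvd_natAbs.mpr hbdvd
      simpa using this
    have h2 : b.natAbs ≤ 2 := Nat.le_of_dvd (by norm_num) h1
    rcases Int.natAbs_eq b with h5 | h5 <;> omega
  rcases hb4 with rfl | rfl | rfl | rfl
  -- b = ±1 : a must be even
  case inl =>
    refine case_b1 A a 1 p hp5 hpodd (Or.inl rfl) ?_ hg0
    rcases Int.even_or_odd a with he | ho
    · exact he
    · exfalso
      rcases ho with ⟨c, rfl⟩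
      rcases hnodd with ⟨d, hd⟩
      obtain ⟨sq, hsq⟩ : ∃ sq, c^2 = sq := ⟨_, rfl⟩
      have : (2*c+1)^2 + 1^2 = 4*sq + 4*c + 2 := by rw [← hsq]; ring
      omega
  case inr.inl =>
    refine case_b1 A a (-1) p hp5 hpodd (Or.inr rfl) ?_ hg0
    rcases Int.even_or_odd a with he | ho
    · exact he
    · exfalso
      rcases ho with ⟨c, rfl⟩
      rcases hnodd with ⟨d, hd⟩
      obtain ⟨sq, hsq⟩ : ∃ sq, c^2 = sq := ⟨_, rfl⟩
      have : (2*c+1)^2 + (-1:ℤ)^2 = 4*sq + 4*c + 2 := by rw [← hsq]; ring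
      omega
  -- b = ±2 : a odd
  case inr.inr.inl =>
    -- b = 2 : show p % 4 = 1 then caseA
    have haodd : Odd a := by
      rcases Int.even_or_odd a with he | ho
      · exfalso
        rcases he with ⟨c, hc⟩
        rcases hnodd with ⟨d, hd⟩
        rw [hc] at hd
        obtain ⟨sq, hsq⟩ : ∃ sq, c^2 = sq := ⟨_, rfl⟩
        have hx : (c+c)^2 + (2:ℤ)^2 = 4*sq + 4 := by rw [← hsq]; ring
        have hy : (2:ℤ)*d+1 = 4*sq+4 := by linarith [hd, hx]
        omega
      · exact ho
    have hext3 := extract p hp5 a 2 (Or.inl rfl) him 3 (fun j hjo hj5 hjp =>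
      Dvd.dvd.mul_right (pow_dvd_pow 2 (by omega)) _)
    have d1 : (8:ℤ) ∣ ((p:ℤ)*2)*(a^(p-1) - 1) :=
      ((odd_pow_even a haodd (p-1) (by obtain ⟨c0,hc0⟩ := hpodd; omega))).mul_left _
    have d2 : (8:ℤ) ∣ (2:ℤ)^3*(Nat.choose p 3:ℤ)*a^(p-3) := by
      exact Dvd.dvd.mul_right (Dvd.dvd.mul_right (by norm_num) _) _
    have h2pb : (8:ℤ) ∣ 2 - (p:ℤ)*2 := by
      have hd := dvd_add (dvd_sub hext3 d2) d1
      convert hd using 1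
      case e'_2 => rfl
      push_cast
      ring
    have hp41 : p % 4 = 1 := by
      obtain ⟨c, hc⟩ := h2pb
      omega
    exact caseA p hp5 a haodd him hp41
  case inr.inr.inr =>
    -- b = -2
    have haodd : Odd a := by
      rcases Int.even_or_odd a with he | ho
      · exfalso
        rcases he with ⟨c, hc⟩
        rcases hnodd with ⟨d, hd⟩
        rw [hc] at hd
        obtain ⟨sq, hsq⟩ : ∃ sq, c^2 = sq := ⟨_, rfl⟩
        have hx : (c+c)^2 + (-2:ℤ)^2 = 4*sq + 4 := by rw [← hsq]; ring
        have hy : (2:ℤ)*d+1 = 4*sq+4 := by linarith [hd, hx]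
        omega
      · exact ho
    have hext3 := extract p hp5 a (-2) (Or.inr rfl) him 3 (fun j hjo hj5 hjp =>
      Dvd.dvd.mul_right (pow_dvd_pow 2 (by omega)) _)
    have d1 : (8:ℤ) ∣ ((p:ℤ)*(-2))*(a^(p-1) - 1) :=
      ((odd_pow_even a haodd (p-1) (by obtain ⟨c0,hc0⟩ := hpodd; omega))).mul_left _
    have d2 : (8:ℤ) ∣ ((-2:ℤ))^3*(Nat.choose p 3:ℤ)*a^(p-3) := by
      exact Dvd.dvd.mul_right (Dvd.dvd.mul_right (by norm_num) _) _
    have h2pb : (8:ℤ) ∣ 2 + (p:ℤ)*2 := by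
      have hd := dvd_add (dvd_sub hext3 d2) d1
      convert hd using 1
      case e'_2 => rfl
      push_cast
      ring
    have hp43 : p % 4 = 3 := by
      obtain ⟨c, hc⟩ := h2pb
      omega
    -- choose p 3 odd
    have hC3 := c3_odd p hp5 hp43
    have hC3odd : Odd ((Nat.choose p 3 : ℕ) : ℤ) := by
      obtain ⟨u, hu⟩ : ∃ u, Nat.choose p 3 = 2*u+1 := ⟨Nat.choose p 3 / 2, by omega⟩
      exact ⟨(u:ℤ), by rw [hu]; push_cast; ring⟩
    -- p % 8 = 3
    have hext4 := extract p hp5 a (-2) (Or.inr rfl) him 4 (fun j hjo hj5 hjp =>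
      Dvd.dvd.mul_right (pow_dvd_pow 2 (by omega)) _)
    have d1' : (16:ℤ) ∣ ((p:ℤ))*(2*(a^(p-1) - 1)) := by
      refine Dvd.dvd.mul_left ?_ _
      obtain ⟨m, hm⟩ := odd_pow_even a haodd (p-1) (by obtain ⟨c0,hc0⟩ := hpodd; omega)
      exact ⟨m, by linarith⟩
    have d2' : (16:ℤ) ∣ 8*((Nat.choose p 3:ℤ)*a^(p-3) - 1) := by
      have hodd : Odd ((Nat.choose p 3:ℤ)*a^(p-3)) := hC3odd.mul (haodd.pow)
      obtain ⟨v, hv⟩ := hodd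
      exact ⟨v, by linarith⟩
    have h2p6 : (16:ℤ) ∣ 2*(p:ℤ) - 6 := by
      have hd := dvd_add (dvd_sub hext4 d1') d2'
      convert hd using 1
      case e'_2 => rfl
      push_cast
      ring
    have hp83 : p % 8 = 3 := by
      obtain ⟨c, hc⟩ := h2p6
      omega
    -- Gaussian congruence setup
    have hQ := mul_star_mk a (-2) (by norm_num)
    -- a^2 = 1 via Jacobi
    have hg3 : ((⟨a,-2⟩:ZI)^3).im = -6*a^2+8 := by
      rw [cube_re_im]
      show 3*a^2*(-2) - (-2)^3 = -6*a^2+8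
      ring
    have ha2 : a^2 = 1 := by
      by_contra hne
      have h9 : 9 ≤ a^2 := by
        have h1 : a ≠ 1 := by rintro rfl; norm_num at hne
        have hm1 : a ≠ -1 := by rintro rfl; norm_num at hne
        obtain ⟨c, hc⟩ := haodd
        have h3 : 3 ≤ a ∨ a ≤ -3 := by omega
        rcases h3 with h3 | h3 <;> nlinarith
      obtain ⟨w, hw⟩ : ∃ w, 3 + 2*2*w = p := ⟨(p-3)/4, by omega⟩
      have hV2 : (⟨a,-2⟩:ZI)^2 + (star (⟨a,-2⟩:ZI))^2 = ((2*(a^2-4):ℤ):ZI) := by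
        rw [V_from_even_pow, gam_sq]
      have hk2 := key_im (⟨a,-2⟩:ZI) (a^2+4) hQ 2 w 3 (a^2-4) hV2
      rw [hw, him, hg3] at hk2
      have he2 : (2:ℤ) - (-(a^2+4)^2)^w * (-6*a^2+8) = 2*(1 + (-(a^2+4)^2)^w*(3*a^2-4)) := by
        ring
      rw [he2] at hk2
      have hzdvd := odd_cancel_two _ _ (odd_sq_sub4 a haodd) hk2
      exact jacobi_kill a haodd h9 w hzdvd
    -- now Q = 5
    have hV8 : (⟨a,-2⟩:ZI)^8 + (star (⟨a,-2⟩:ZI))^8 = ((2*(-527):ℤ):ZI) := by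
      rw [V_from_even_pow, gam_pow8 a ha2]
    have h527 : Odd (527:ℤ) := ⟨263, by norm_num⟩
    have hQ5 : a^2 + 4 = 5 := by linarith [ha2]
    rcases (by omega : p % 16 = 3 ∨ p % 16 = 11) with h16 | h16
    · -- p ≡ 3 mod 16
      obtain ⟨w₁, hw₁⟩ : ∃ w₁, 3 + 2*8*w₁ = p := ⟨(p-3)/16, by omega⟩
      have hk8 := key_im (⟨a,-2⟩:ZI) (a^2+4) hQ 8 w₁ 3 (-527) hV8
      rw [hw₁, him, hg3, hQ5] at hk8
      have he6 : -6*a^2+8 = 2 := by linarith [ha2]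
      rw [he6] at hk8
      have hk8' : (527:ℤ) ∣ 2*(1 - (-(5:ℤ)^8)^w₁) := by
        rw [← neg_dvd]
        convert hk8 using 1
        case e'_2 => rfl
        ring
      have h1c := odd_cancel_two _ _ h527 hk8'
      have h3w := zmod31_kill w₁ h1c
      have h3p : (3:ℕ) ∣ p := by omega
      have := (Nat.prime_dvd_prime_iff_eq (by norm_num) hp).mp h3p
      omega
    · -- p ≡ 11 mod 16
      obtain ⟨w₂, hw₂⟩ : ∃ w₂, 0 + 2*8*(w₂+1) = p + 5 := ⟨(p-11)/16, by omega⟩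
      have hk8i := key_im (⟨a,-2⟩:ZI) (a^2+4) hQ 8 (w₂+1) 0 (-527) hV8
      have hk8r := key_re (⟨a,-2⟩:ZI) (a^2+4) hQ 8 (w₂+1) 0 (-527) hV8
      rw [hw₂] at hk8i hk8r
      have hps : (⟨a,-2⟩:ZI)^(p+5) = ⟨A,2⟩ * ⟨41*a, 38⟩ := by
        rw [pow_add, hg0, gam_pow5 a ha2]
      have hre5 : ((⟨a,-2⟩:ZI)^(p+5)).re = 41*a*A - 76 := by
        rw [hps]
        simp [Zsqrtd.re_mul]
        ring
      have him5 : ((⟨a,-2⟩:ZI)^(p+5)).im = 38*A + 82*a := by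
        rw [hps]
        simp [Zsqrtd.im_mul]
        ring
      rw [pow_zero, him5, hQ5] at hk8i
      rw [pow_zero, hre5, hQ5] at hk8r
      simp only [Zsqrtd.im_one, Zsqrtd.re_one, mul_zero, mul_one, sub_zero] at hk8i hk8r
      have h17i : (17:ℤ) ∣ 38*A + 82*a := dvd_trans ⟨-31, by norm_num⟩ hk8i
      have h17r : (17:ℤ) ∣ (41*a*A - 76) - (-(5:ℤ)^8)^(w₂+1) :=
        dvd_trans ⟨-31, by norm_num⟩ hk8r
      have hcc : (((-(5:ℤ)^8)^(w₂+1) : ℤ) : ZMod 17) = 1 := by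
        rw [Int.cast_pow]
        have hce : (((-(5:ℤ)^8 : ℤ) : ZMod 17)) = 1 := by decide
        rw [hce, one_pow]
      exact zmod17_kill a A (sq_eq_one a ha2) _ hcc h17i h17r


end Stmt7

open Stmt7 in
/-- Let A be a positive integer not divisible by 4 and suppose A² + 4 = q^k for
an odd prime q and integer k ≥ 2. Then A = 2 or A = 11. -/
theorem stmt_7 (A : ℕ) (hA : 0 < A) (h4 : ¬ 4 ∣ A) (q k : ℕ) (hq : q.Prime)
    (hqodd : Odd q) (hk : 2 ≤ k) (h : A ^ 2 + 4 = q ^ k) :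
    A = 2 ∨ A = 11 := by
  -- A is odd
  have hqk : Odd (q^k) := hqodd.pow
  have hAodd : Odd A := by
    rcases Nat.even_or_odd A with he | ho
    · exfalso
      obtain ⟨c, hc⟩ := he
      obtain ⟨d, hd⟩ := hqk
      obtain ⟨sq, hsq⟩ : ∃ sq, c^2 = sq := ⟨_, rfl⟩
      have hx : A^2 + 4 = 4*sq + 4 := by rw [hc, ← hsq]; ring
      have hy : 4*sq+4 = 2*d+1 := by
        calc 4*sq+4 = A^2+4 := hx.symm
        _ = q^k := h
        _ = 2*d+1 := hd
      omega
    · exact ho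
  have hAoddZ : Odd (A:ℤ) := by
    obtain ⟨c, hc⟩ := hAodd
    exact ⟨(c:ℤ), by exact_mod_cast hc⟩
  have hZ : ((A:ℤ))^2 + 4 = ((q:ℤ))^k := by exact_mod_cast h
  -- k cannot be even
  have hkodd : Odd k := by
    rcases Nat.even_or_odd k with ⟨m, hm⟩ | ho
    · exfalso
      set B := q^m with hB
      have hB2 : B^2 = A^2 + 4 := by
        rw [hB, ← pow_mul, h, hm]
        ring_nf
      have hAB : A < B := by nlinarith
      have hle : (A+1)^2 ≤ B^2 := by nlinarith
      have hA1 : A = 1 := by nlinarith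
      rw [hA1] at hB2
      have hB3 : B ≤ 2 ∨ 3 ≤ B := by omega
      rcases hB3 with hc | hc <;> nlinarith
    · exact ho
  by_cases h3 : 3 ∣ k
  · right
    obtain ⟨m, hm⟩ := h3
    have hZ3 : ((A:ℤ))^2 + 4 = ((q:ℤ)^m)^3 := by
      rw [hZ, hm, mul_comm, pow_mul]
    have := mordell (A:ℤ) ((q:ℤ)^m) (by exact_mod_cast hA) hAoddZ hZ3
    exact_mod_cast this
  · exfalso
    set pm := k.minFac with hpm
    have hkne1 : k ≠ 1 := by omega
    have hpmp : pm.Prime := Nat.minFac_prime hkne1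
    have hpmdvd : pm ∣ k := Nat.minFac_dvd k
    clear_value pm
    have hpm2 : pm ≠ 2 := by
      intro h2
      rw [h2] at hpmdvd
      obtain ⟨c, hc⟩ := hkodd
      omega
    have hpm3 : pm ≠ 3 := by
      intro h3'
      rw [h3'] at hpmdvd
      exact h3 hpmdvd
    have hpm5 : 5 ≤ pm := by
      by_contra hlt
      have h2le := hpmp.two_le
      have h4' : pm ≠ 4 := by
        intro h4''
        rw [h4''] at hpmp
        norm_num at hpmp
      omega
    obtain ⟨m, hm⟩ := hpmdvd
    have hZp : ((A:ℤ))^2 + 4 = ((q:ℤ)^m)^pm := by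
      rw [hZ, hm, mul_comm, pow_mul]
    exact core (A:ℤ) ((q:ℤ)^m) hAoddZ pm hpmp hpm5 hZp
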